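/- arXiv:2303.10676 — 2 statements merged into one kernel-verified Lean document; each statement's English description precedes it below -/
import Mathlib

section
/- Let X₁, X₂ be Banach spaces, V₁ ⊆ X₁ and V₂ ⊆ X₂ nonempty closed convex sets, X = X₁ ⊕_∞ X₂, V = V₁ × V₂. If for each i ∈ {1,2} and every nonempty closed bounded B_i ⊆ X_i the set cent_{V_i}(B_i) = {v ∈ V_i : r(v,B_i) = rad_{V_i}(B_i)} is nonempty, then for every nonempty closed bounded B ⊆ X the set cent_V(B) is nonempty. -/
open Metric Set Bornology Pointwise

/-- The farthest distance `r(v,B) = sup_{b ∈ B} ‖v - b‖`. -/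
noncomputable def farr {X : Type*} [NormedAddCommGroup X] (v : X) (B : Set X) : ℝ :=
  ⨆ b : B, ‖v - (b : X)‖

/-- The restricted Chebyshev radius `rad_V(B) = inf_{v ∈ V} r(v,B)`. -/
noncomputable def rad {X : Type*} [NormedAddCommGroup X] (V B : Set X) : ℝ :=
  ⨅ v : V, farr (v : X) B

/-- The set of restricted Chebyshev centers of `B` in `V`. -/
noncomputable def cheb {X : Type*} [NormedAddCommGroup X] (V B : Set X) : Set X :=
  {v ∈ V | farr v B = rad V B}
section Aux

variable {X : Type*} [NormedAddCommGroup X]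

lemma farr_nonneg' {v : X} {B : Set X} : 0 ≤ farr v B :=
  Real.iSup_nonneg fun _ => norm_nonneg _

lemma bddAbove_farr' {v : X} {B : Set X} (hB : IsBounded B) :
    BddAbove (Set.range fun b : B => ‖v - (b : X)‖) := by
  obtain ⟨C, hC⟩ := (isBounded_iff_forall_norm_le).1 hB
  refine ⟨‖v‖ + C, ?_⟩
  rintro _ ⟨b, rfl⟩
  calc ‖v - (b : X)‖ ≤ ‖v‖ + ‖(b : X)‖ := norm_sub_le _ _
    _ ≤ ‖v‖ + C := by have := hC b b.2; linarith

lemma le_farr' {v b : X} {B : Set X} (hB : IsBounded B) (hb : b ∈ B) :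
    ‖v - b‖ ≤ farr v B :=
  le_ciSup (bddAbove_farr' hB) (⟨b, hb⟩ : B)

lemma farr_le' {v : X} {B : Set X} {r : ℝ} (hr : 0 ≤ r)
    (h : ∀ b ∈ B, ‖v - b‖ ≤ r) : farr v B ≤ r :=
  Real.iSup_le (fun b => h b b.2) hr

lemma rad_le' {V B : Set X} {v : X} (hv : v ∈ V) : rad V B ≤ farr v B :=
  ciInf_le ⟨0, by rintro _ ⟨w, rfl⟩; exact farr_nonneg'⟩ (⟨v, hv⟩ : V)

lemma le_rad' {V B : Set X} {r : ℝ} (hV : V.Nonempty)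
    (h : ∀ v ∈ V, r ≤ farr v B) : r ≤ rad V B := by
  haveI := hV.to_subtype
  exact le_ciInf fun v => h v v.2

end Aux

lemma farr_prod {X₁ X₂ : Type*} [NormedAddCommGroup X₁] [NormedAddCommGroup X₂]
    (v : X₁ × X₂) (B : Set (X₁ × X₂)) (hBbd : IsBounded B) :
    farr v B = max (farr v.1 (closure (Prod.fst '' B))) (farr v.2 (closure (Prod.snd '' B))) := by
  have hB₁bd : IsBounded (closure (Prod.fst '' B)) := by
    refine IsBounded.closure ?_
    obtain ⟨C, hC⟩ := (isBounded_iff_forall_norm_le).1 hBbd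
    refine (isBounded_iff_forall_norm_le).2 ⟨C, ?_⟩
    rintro _ ⟨b, hb, rfl⟩
    exact (norm_fst_le b).trans (hC b hb)
  have hB₂bd : IsBounded (closure (Prod.snd '' B)) := by
    refine IsBounded.closure ?_
    obtain ⟨C, hC⟩ := (isBounded_iff_forall_norm_le).1 hBbd
    refine (isBounded_iff_forall_norm_le).2 ⟨C, ?_⟩
    rintro _ ⟨b, hb, rfl⟩
    exact (norm_snd_le b).trans (hC b hb)
  apply le_antisymm
  · refine farr_le' (le_max_of_le_left farr_nonneg') fun b hb => ?_
    have : ‖v - b‖ = max ‖v.1 - b.1‖ ‖v.2 - b.2‖ := rfl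
    rw [this]
    exact max_le_max
      (le_farr' hB₁bd (subset_closure (Set.mem_image_of_mem _ hb)))
      (le_farr' hB₂bd (subset_closure (Set.mem_image_of_mem _ hb)))
  · refine max_le ?_ ?_
    · refine farr_le' farr_nonneg' fun b₁ hb₁ => ?_
      have hcl : IsClosed {x : X₁ | ‖v.1 - x‖ ≤ farr v B} :=
        isClosed_le (by continuity) continuous_const
      have hsub : Prod.fst '' B ⊆ {x : X₁ | ‖v.1 - x‖ ≤ farr v B} := by
        rintro _ ⟨b, hb, rfl⟩
        exact le_trans (le_max_left _ _ : ‖v.1 - b.1‖ ≤ max ‖v.1 - b.1‖ ‖v.2 - b.2‖)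
          (le_farr' hBbd hb)
      exact closure_minimal hsub hcl hb₁
    · refine farr_le' farr_nonneg' fun b₂ hb₂ => ?_
      have hcl : IsClosed {x : X₂ | ‖v.2 - x‖ ≤ farr v B} :=
        isClosed_le (by continuity) continuous_const
      have hsub : Prod.snd '' B ⊆ {x : X₂ | ‖v.2 - x‖ ≤ farr v B} := by
        rintro _ ⟨b, hb, rfl⟩
        exact le_trans (le_max_right _ _ : ‖v.2 - b.2‖ ≤ max ‖v.1 - b.1‖ ‖v.2 - b.2‖)
          (le_farr' hBbd hb)
      exact closure_minimal hsub hcl hb₂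

theorem stmt3 {X₁ X₂ : Type*} [NormedAddCommGroup X₁] [NormedSpace ℝ X₁] [CompleteSpace X₁]
    [NormedAddCommGroup X₂] [NormedSpace ℝ X₂] [CompleteSpace X₂]
    (V₁ : Set X₁) (V₂ : Set X₂)
    (hV₁ne : V₁.Nonempty) (hV₁c : IsClosed V₁) (hV₁conv : Convex ℝ V₁)
    (hV₂ne : V₂.Nonempty) (hV₂c : IsClosed V₂) (hV₂conv : Convex ℝ V₂)
    (h₁ : ∀ B₁ : Set X₁, B₁.Nonempty → IsClosed B₁ → IsBounded B₁ → (cheb V₁ B₁).Nonempty)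
    (h₂ : ∀ B₂ : Set X₂, B₂.Nonempty → IsClosed B₂ → IsBounded B₂ → (cheb V₂ B₂).Nonempty) :
    ∀ B : Set (X₁ × X₂), B.Nonempty → IsClosed B → IsBounded B →
      (cheb (V₁ ×ˢ V₂) B).Nonempty := by
  intro B hBne hBc hBbd
  set B₁ := closure (Prod.fst '' B) with hB₁def
  set B₂ := closure (Prod.snd '' B) with hB₂def
  have hB₁ne : B₁.Nonempty := (hBne.image _).closure
  have hB₂ne : B₂.Nonempty := (hBne.image _).closure
  have hB₁bd : IsBounded B₁ := by
    refine IsBounded.closure ?_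
    obtain ⟨C, hC⟩ := (isBounded_iff_forall_norm_le).1 hBbd
    refine (isBounded_iff_forall_norm_le).2 ⟨C, ?_⟩
    rintro _ ⟨b, hb, rfl⟩
    exact (norm_fst_le b).trans (hC b hb)
  have hB₂bd : IsBounded B₂ := by
    refine IsBounded.closure ?_
    obtain ⟨C, hC⟩ := (isBounded_iff_forall_norm_le).1 hBbd
    refine (isBounded_iff_forall_norm_le).2 ⟨C, ?_⟩
    rintro _ ⟨b, hb, rfl⟩
    exact (norm_snd_le b).trans (hC b hb)
  obtain ⟨c₁, hc₁V, hc₁⟩ := h₁ B₁ hB₁ne isClosed_closure hB₁bd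
  obtain ⟨c₂, hc₂V, hc₂⟩ := h₂ B₂ hB₂ne isClosed_closure hB₂bd
  have hVne : (V₁ ×ˢ V₂).Nonempty := ⟨(c₁, c₂), ⟨hc₁V, hc₂V⟩⟩
  refine ⟨(c₁, c₂), ⟨hc₁V, hc₂V⟩, ?_⟩
  have hfc : farr (c₁, c₂) B = max (rad V₁ B₁) (rad V₂ B₂) := by
    rw [farr_prod _ _ hBbd]
    simp only [← hB₁def, ← hB₂def]
    rw [hc₁, hc₂]
  apply le_antisymm
  · rw [hfc]
    refine le_rad' hVne fun v hv => ?_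
    rw [farr_prod _ _ hBbd]
    simp only [← hB₁def, ← hB₂def]
    exact max_le_max (rad_le' hv.1) (rad_le' hv.2)
  · exact rad_le' ⟨hc₁V, hc₂V⟩
end

section
/- Let T be a topological space and X a uniformly convex Banach space. Then for every nonempty closed bounded subset B of C_b(T,X) (bounded continuous X-valued functions with sup norm), the set of restricted Chebyshev centers of B in the closed unit ball of C_b(T,X) is nonempty, and the triplet (C_b(T,X), B_{C_b(T,X)}, CB(C_b(T,X))) has property-(P₁). -/
set_option maxHeartbeats 1000000

open Metric Set Bornology Pointwise

/-- Property-(P₁) for the triplet `(X, V, CB(X))`: restricted Chebyshev centers exist for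
every nonempty closed bounded set and near-centers are close to centers. -/
noncomputable def propP1 {X : Type*} [NormedAddCommGroup X] (V : Set X) : Prop :=
  ∀ B : Set X, B.Nonempty → IsClosed B → IsBounded B →
    (cheb V B).Nonempty ∧ ∀ ε > (0 : ℝ), ∃ δ > (0 : ℝ),
      {v ∈ V | farr v B ≤ rad V B + δ} ⊆ cheb V B + closedBall 0 ε

section helpers
variable {E : Type*} [NormedAddCommGroup E] {B : Set E}

lemma farr_bddAbove (hB : IsBounded B) (f : E) :
    BddAbove (Set.range fun b : B => ‖f - (b : E)‖) := by
  obtain ⟨C, hC⟩ := isBounded_iff_forall_norm_le.mp hB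
  refine ⟨‖f‖ + C, ?_⟩
  rintro x ⟨b, rfl⟩
  exact (norm_sub_le _ _).trans (by gcongr; exact hC b b.2)

lemma norm_sub_le_farr (hB : IsBounded B) (f : E) {b : E} (hb : b ∈ B) : ‖f - b‖ ≤ farr f B :=
  le_ciSup (farr_bddAbove hB f) (⟨b, hb⟩ : B)

lemma farr_le (hne : B.Nonempty) {f : E} {s : ℝ} (h : ∀ b ∈ B, ‖f - b‖ ≤ s) : farr f B ≤ s := by
  haveI := hne.to_subtype
  exact ciSup_le fun b => h b b.2

lemma farr_nonneg (hne : B.Nonempty) (hB : IsBounded B) (f : E) : 0 ≤ farr f B := by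
  obtain ⟨b, hb⟩ := hne
  exact (norm_nonneg _).trans (norm_sub_le_farr hB f hb)

lemma farr_le_farr_add (hne : B.Nonempty) (hB : IsBounded B) (f g : E) :
    farr f B ≤ farr g B + ‖f - g‖ := by
  refine farr_le hne fun b hb => ?_
  have h1 : f - b = (g - b) + (f - g) := by abel
  calc ‖f - b‖ = ‖(g - b) + (f - g)‖ := by rw [← h1]
    _ ≤ ‖g - b‖ + ‖f - g‖ := norm_add_le _ _
    _ ≤ farr g B + ‖f - g‖ := by gcongr; exact norm_sub_le_farr hB g hb

lemma rad_le_farr (hne : B.Nonempty) (hB : IsBounded B) {V : Set E} {v : E} (hv : v ∈ V) :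
    rad V B ≤ farr v B := by
  refine ciInf_le ⟨0, ?_⟩ (⟨v, hv⟩ : V)
  rintro x ⟨w, rfl⟩
  exact farr_nonneg hne hB _

lemma rad_nonneg (hne : B.Nonempty) (hB : IsBounded B) {V : Set E} (hV : V.Nonempty) :
    0 ≤ rad V B := by
  haveI := hV.to_subtype
  exact le_ciInf fun v => farr_nonneg hne hB _

end helpers

lemma segment_norm_le {X : Type*} [NormedAddCommGroup X] [NormedSpace ℝ X]
    {α s' : ℝ} (h0 : 0 ≤ α) (h1 : α ≤ 1) {p q : X} (hp : ‖p‖ ≤ s') (hq : ‖q‖ ≤ s') :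
    ‖(1 - α) • p + α • q‖ ≤ s' := by
  calc ‖(1 - α) • p + α • q‖ ≤ ‖(1 - α) • p‖ + ‖α • q‖ := norm_add_le _ _
    _ = (1 - α) * ‖p‖ + α * ‖q‖ := by
        rw [norm_smul, norm_smul, Real.norm_of_nonneg (by linarith), Real.norm_of_nonneg h0]
    _ ≤ (1 - α) * s' + α * s' := by
        have := norm_nonneg p
        nlinarith [norm_nonneg q]
    _ = s' := by ring

lemma lemP {X : Type*} [NormedAddCommGroup X] [NormedSpace ℝ X]
    {ε s s' : ℝ} (hε : 0 < ε) (hss : s' ≤ s)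
    (huc : ∀ x y : X, ‖x‖ ≤ s → ‖y‖ ≤ s → ε ≤ ‖x - y‖ → ‖x + y‖ ≤ 2 * s')
    (f y c : X) (hf : ‖f - c‖ ≤ s) (hy : ‖y - c‖ ≤ s') :
    ‖f + (ε / max ε ‖y - f‖) • (y - f) - c‖ ≤ s' := by
  set d := ‖y - f‖ with hd
  have hM : 0 < max ε d := lt_max_iff.mpr (Or.inl hε)
  set θ := ε / max ε d with hθdef
  have hθpos : 0 < θ := div_pos hε hM
  have hθ1 : θ ≤ 1 := div_le_one_of_le₀ (le_max_left _ _) hM.le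
  have key : ∀ n : ℕ, ‖f + max θ ((2 : ℝ)⁻¹ ^ n) • (y - f) - c‖ ≤ s' := by
    intro n
    induction n with
    | zero =>
        have h1 : f + max θ ((2 : ℝ)⁻¹ ^ 0) • (y - f) - c = y - c := by
          rw [pow_zero, max_eq_right hθ1]; module
        rw [h1]; exact hy
    | succ n ih =>
        set a := (2 : ℝ)⁻¹ ^ n with ha
        have hapos : 0 < a := by positivity
        have ha1 : a ≤ 1 := pow_le_one₀ (by norm_num) (by norm_num)
        have hsucc : (2 : ℝ)⁻¹ ^ (n + 1) = a / 2 := by rw [pow_succ]; ring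
        rcases le_or_gt a θ with hc1 | hc1
        · rw [hsucc, max_eq_left (by linarith : a / 2 ≤ θ)]
          rwa [max_eq_left hc1] at ih
        · have hθlt1 : θ < 1 := lt_of_lt_of_le hc1 ha1
          have hεmax : ε < max ε d := by
            by_contra h
            push_neg at h
            have hme : max ε d = ε := le_antisymm h (le_max_left _ _)
            rw [hθdef, hme, div_self hε.ne'] at hθlt1
            exact lt_irrefl _ hθlt1
          have hεd : ε < d := by
            rcases max_cases ε d with ⟨h1, _⟩ | ⟨h1, h2⟩
            · rw [h1] at hεmax; exact absurd hεmax (lt_irrefl _)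
            · rwa [h1] at hεmax
          have hdpos : 0 < d := hε.trans hεd
          have hmaxd : max ε d = d := max_eq_right hεd.le
          have hθd : θ = ε / d := by rw [hθdef, hmaxd]
          have hεad : ε < a * d := by
            rw [hθd, div_lt_iff₀ hdpos] at hc1
            linarith
          have ihn : ‖f + a • (y - f) - c‖ ≤ s' := by rwa [max_eq_right hc1.le] at ih
          have hsep : ε ≤ ‖(f - c) - (f + a • (y - f) - c)‖ := by
            have h2 : (f - c) - (f + a • (y - f) - c) = -(a • (y - f)) := by module
            rw [h2, norm_neg, norm_smul, Real.norm_of_nonneg hapos.le, ← hd]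
            exact hεad.le
          have hmid := huc (f - c) (f + a • (y - f) - c) hf (ihn.trans hss) hsep
          have hm : ‖f + (a / 2) • (y - f) - c‖ ≤ s' := by
            have hrepr : f + (a / 2) • (y - f) - c
                = (2⁻¹ : ℝ) • ((f - c) + (f + a • (y - f) - c)) := by module
            rw [hrepr, norm_smul, Real.norm_of_nonneg (by norm_num : (0:ℝ) ≤ 2⁻¹)]
            linarith
          rcases le_or_gt θ (a / 2) with hc2 | hc2
          · rw [hsucc, max_eq_right hc2]
            exact hm
          · rw [hsucc, max_eq_left hc2.le]
            set α := 2 * θ / a - 1 with hα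
            have hα0 : 0 ≤ α := by
              have h3 : 1 ≤ 2 * θ / a := by rw [le_div_iff₀ hapos]; linarith
              simp only [hα]; linarith
            have hα1 : α ≤ 1 := by
              have h3 : 2 * θ / a ≤ 2 := by rw [div_le_iff₀ hapos]; nlinarith
              simp only [hα]; linarith
            have hrepr : f + θ • (y - f) - c
                = (1 - α) • (f + (a / 2) • (y - f) - c) + α • (f + a • (y - f) - c) := by
              have hcoef : (1 - α) * (a / 2) + α * a = θ := by
                simp only [hα]; field_simp; ring
              have e1 : (1 - α) • (f + (a / 2) • (y - f) - c) + α • (f + a • (y - f) - c)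
                  = f + ((1 - α) * (a / 2) + α * a) • (y - f) - c := by module
              rw [e1, hcoef]
            rw [hrepr]
            exact segment_norm_le hα0 hα1 hm ihn
  obtain ⟨n, hn⟩ := exists_pow_lt_of_lt_one hθpos (by norm_num : (2 : ℝ)⁻¹ < 1)
  have hkn := key n
  rwa [max_eq_left hn.le] at hkn

theorem mainP1 {T : Type*} [TopologicalSpace T]
    {X : Type*} [NormedAddCommGroup X] [NormedSpace ℝ X] [UniformConvexSpace X]
    [CompleteSpace X] (B : Set (BoundedContinuousFunction T X))
    (hBne : B.Nonempty) (hBbd : IsBounded B) :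
    (cheb (closedBall (0 : BoundedContinuousFunction T X) 1) B).Nonempty ∧
      ∀ ε > (0 : ℝ), ∃ δ > (0 : ℝ),
        {v ∈ closedBall (0 : BoundedContinuousFunction T X) 1 |
            farr v B ≤ rad (closedBall (0 : BoundedContinuousFunction T X) 1) B + δ} ⊆
          cheb (closedBall (0 : BoundedContinuousFunction T X) 1) B + closedBall 0 ε := by
  classical
  set V : Set (BoundedContinuousFunction T X) := closedBall 0 1 with hVdef
  have hVne : V.Nonempty := ⟨0, mem_closedBall_self zero_le_one⟩
  set r₀ := rad V B with hr₀def
  have hr₀0 : 0 ≤ r₀ := rad_nonneg hBne hBbd hVne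
  have hmemV : ∀ {v : BoundedContinuousFunction T X}, v ∈ V → ‖v‖ ≤ 1 := by
    intro v hv
    rwa [hVdef, mem_closedBall_zero_iff] at hv
  have hex : ∀ η : ℝ, 0 < η → ∃ g ∈ V, farr g B ≤ r₀ + η := by
    intro η hη
    haveI := hVne.to_subtype
    have hlt : (⨅ v : V, farr (v : BoundedContinuousFunction T X) B) < r₀ + η := by
      rw [hr₀def]
      exact lt_add_of_pos_right _ hη
    obtain ⟨v, hv⟩ := exists_lt_of_ciInf_lt hlt
    exact ⟨v, v.2, hv.le⟩
  -- Main Lemma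
  have ML : ∀ ε : ℝ, 0 < ε → ∃ δ : ℝ, 0 < δ ∧ ∀ δ' : ℝ, 0 < δ' → ∀ f ∈ V,
      farr f B ≤ r₀ + δ → ∃ f' ∈ V, farr f' B ≤ r₀ + δ' ∧ ‖f - f'‖ ≤ ε := by
    intro ε hε
    rcases le_or_gt r₀ (ε / 4) with hr | hr
    · refine ⟨min 1 (ε / 4), by positivity, fun δ' hδ' f hfV hfr => ?_⟩
      obtain ⟨g, hgV, hgr⟩ := hex (min δ' (ε / 4)) (by positivity)
      refine ⟨g, hgV, hgr.trans (by gcongr; exact min_le_left _ _), ?_⟩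
      obtain ⟨b, hb⟩ := hBne
      have h1 : ‖f - b‖ ≤ r₀ + min 1 (ε / 4) := (norm_sub_le_farr hBbd f hb).trans hfr
      have h2 : ‖g - b‖ ≤ r₀ + min δ' (ε / 4) := (norm_sub_le_farr hBbd g hb).trans hgr
      have h3 : f - g = (f - b) - (g - b) := by abel
      have hmin1 : min 1 (ε / 4) ≤ ε / 4 := min_le_right _ _
      have hmin2 : min δ' (ε / 4) ≤ ε / 4 := min_le_right _ _
      calc ‖f - g‖ = ‖(f - b) - (g - b)‖ := by rw [← h3]
        _ ≤ ‖f - b‖ + ‖g - b‖ := norm_sub_le _ _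
        _ ≤ ε := by linarith
    · have hr₀pos : (0 : ℝ) < r₀ := lt_trans (by positivity) hr
      have hR : (0 : ℝ) < r₀ + 1 := by linarith
      obtain ⟨δ₀, hδ₀, huc⟩ :=
        exists_forall_closed_ball_dist_add_le_two_sub X (div_pos hε hR)
      refine ⟨min 1 (r₀ * δ₀ / 2), lt_min one_pos (div_pos (mul_pos hr₀pos hδ₀) two_pos),
        fun δ' hδ' f hfV hfr => ?_⟩
      set δ := min 1 (r₀ * δ₀ / 2) with hδdef
      have hδpos : 0 < δ := lt_min one_pos (div_pos (mul_pos hr₀pos hδ₀) two_pos)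
      rcases le_or_gt δ δ' with hle | hlt
      · exact ⟨f, hfV, hfr.trans (by linarith), by simpa using hε.le⟩
      obtain ⟨g, hgV, hgr⟩ := hex δ' hδ'
      set s := r₀ + δ with hsdef
      set s' := r₀ + δ' with hs'def
      have hs'pos : 0 < s' := by rw [hs'def]; linarith
      have hspos : 0 < s := by rw [hsdef]; linarith
      have hδ1 : δ ≤ 1 := min_le_left _ _
      have hδr : 2 * δ ≤ r₀ * δ₀ := by
        have := min_le_right 1 (r₀ * δ₀ / 2)
        rw [hδdef]; linarith
      have hucs : ∀ x z : X, ‖x‖ ≤ s → ‖z‖ ≤ s → ε ≤ ‖x - z‖ → ‖x + z‖ ≤ 2 * s' := by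
        intro x z hx hz hxz
        have hx1 : ‖s⁻¹ • x‖ ≤ 1 := by
          rw [norm_smul, Real.norm_of_nonneg (by positivity)]
          rw [inv_mul_le_iff₀ hspos]
          simpa using hx
        have hz1 : ‖s⁻¹ • z‖ ≤ 1 := by
          rw [norm_smul, Real.norm_of_nonneg (by positivity)]
          rw [inv_mul_le_iff₀ hspos]
          simpa using hz
        have hsep : ε / (r₀ + 1) ≤ ‖s⁻¹ • x - s⁻¹ • z‖ := by
          rw [← smul_sub, norm_smul, Real.norm_of_nonneg (by positivity)]
          have hsle : s ≤ r₀ + 1 := by rw [hsdef]; linarith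
          calc ε / (r₀ + 1) ≤ ε / s := by gcongr
            _ = s⁻¹ * ε := by rw [div_eq_inv_mul]
            _ ≤ s⁻¹ * ‖x - z‖ := by gcongr
        have h2 := huc hx1 hz1 hsep
        rw [← smul_add, norm_smul, Real.norm_of_nonneg (by positivity)] at h2
        have h3 : ‖x + z‖ ≤ s * (2 - δ₀) := by
          rw [inv_mul_le_iff₀ hspos] at h2
          linarith [h2]
        have h4 : 0 ≤ ‖x + z‖ := norm_nonneg _
        nlinarith
      -- construct f'
      have hcont : Continuous fun t => f t + (ε / max ε ‖g t - f t‖) • (g t - f t) := by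
        have h1 : Continuous fun t => g t - f t := g.continuous.sub f.continuous
        have h2 : Continuous fun t => ε / max ε ‖g t - f t‖ :=
          continuous_const.div (continuous_const.max h1.norm)
            (fun t => (lt_max_iff.mpr (Or.inl hε)).ne')
        exact f.continuous.add (h2.smul h1)
      have hid : ∀ (θ : ℝ) (u v : X), u + θ • (v - u) = (1 - θ) • u + θ • v := by
        intro θ u v; module
      have hθ01 : ∀ t, 0 ≤ ε / max ε ‖g t - f t‖ ∧ ε / max ε ‖g t - f t‖ ≤ 1 := by
        intro t
        have hM : 0 < max ε ‖g t - f t‖ := lt_max_iff.mpr (Or.inl hε)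
        exact ⟨by positivity, div_le_one_of_le₀ (le_max_left _ _) hM.le⟩
      have hbd1 : ∀ t, ‖f t + (ε / max ε ‖g t - f t‖) • (g t - f t)‖ ≤ 1 := by
        intro t
        obtain ⟨hθ0, hθ1⟩ := hθ01 t
        rw [hid]
        calc ‖(1 - ε / max ε ‖g t - f t‖) • f t + (ε / max ε ‖g t - f t‖) • g t‖
            ≤ ‖(1 - ε / max ε ‖g t - f t‖) • f t‖ + ‖(ε / max ε ‖g t - f t‖) • g t‖ :=
              norm_add_le _ _
          _ = (1 - ε / max ε ‖g t - f t‖) * ‖f t‖ + (ε / max ε ‖g t - f t‖) * ‖g t‖ := by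
              rw [norm_smul, norm_smul, Real.norm_of_nonneg (by linarith),
                Real.norm_of_nonneg hθ0]
          _ ≤ (1 - ε / max ε ‖g t - f t‖) * 1 + (ε / max ε ‖g t - f t‖) * 1 := by
              have hf1 : ‖f t‖ ≤ 1 := (f.norm_coe_le_norm t).trans (hmemV hfV)
              have hg1 : ‖g t‖ ≤ 1 := (g.norm_coe_le_norm t).trans (hmemV hgV)
              have h5 : 0 ≤ (1 : ℝ) - ε / max ε ‖g t - f t‖ := by linarith
              nlinarith
          _ = 1 := by ring
      set f' : BoundedContinuousFunction T X :=
        BoundedContinuousFunction.ofNormedAddCommGroup _ hcont 1 hbd1 with hf'def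
      have hf'app : ∀ t, f' t = f t + (ε / max ε ‖g t - f t‖) • (g t - f t) := fun t => rfl
      have hf'V : f' ∈ V := by
        rw [hVdef, mem_closedBall_zero_iff]
        exact (BoundedContinuousFunction.norm_le zero_le_one).mpr hbd1
      refine ⟨f', hf'V, ?_, ?_⟩
      · -- farr f' B ≤ r₀ + δ'
        refine farr_le hBne fun b hb => ?_
        have hfb : ‖f - b‖ ≤ s := (norm_sub_le_farr hBbd f hb).trans hfr
        have hgb : ‖g - b‖ ≤ s' := (norm_sub_le_farr hBbd g hb).trans hgr
        refine (BoundedContinuousFunction.norm_le hs'pos.le).mpr fun t => ?_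
        have hfbt : ‖f t - b t‖ ≤ s := by
          calc ‖f t - b t‖ = ‖(f - b) t‖ := by simp
            _ ≤ ‖f - b‖ := (f - b).norm_coe_le_norm t
            _ ≤ s := hfb
        have hgbt : ‖g t - b t‖ ≤ s' := by
          calc ‖g t - b t‖ = ‖(g - b) t‖ := by simp
            _ ≤ ‖g - b‖ := (g - b).norm_coe_le_norm t
            _ ≤ s' := hgb
        have := lemP hε (by rw [hsdef, hs'def]; linarith) hucs (f t) (g t) (b t) hfbt hgbt
        calc ‖(f' - b) t‖ = ‖f t + (ε / max ε ‖g t - f t‖) • (g t - f t) - b t‖ := by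
              simp [hf'app]
          _ ≤ s' := this
      · -- ‖f - f'‖ ≤ ε
        refine (BoundedContinuousFunction.norm_le hε.le).mpr fun t => ?_
        have hM : 0 < max ε ‖g t - f t‖ := lt_max_iff.mpr (Or.inl hε)
        have h6 : ‖(f - f') t‖ = ‖(ε / max ε ‖g t - f t‖) • (g t - f t)‖ := by
          simp only [BoundedContinuousFunction.coe_sub, Pi.sub_apply, hf'app]
          rw [show f t - (f t + (ε / max ε ‖g t - f t‖) • (g t - f t))
              = -((ε / max ε ‖g t - f t‖) • (g t - f t)) by abel, norm_neg]
        rw [h6, norm_smul, Real.norm_of_nonneg (hθ01 t).1]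
        rw [div_mul_eq_mul_div, div_le_iff₀ hM]
        have := le_max_right ε ‖g t - f t‖
        nlinarith
  -- iteration towards an actual center
  have approx : ∀ ε : ℝ, 0 < ε → ∃ δ : ℝ, 0 < δ ∧ ∀ f ∈ V, farr f B ≤ r₀ + δ →
      ∃ L ∈ cheb V B, ‖f - L‖ ≤ ε := by
    intro ε hε
    have Hk : ∀ k : ℕ, ∃ δ : ℝ, 0 < δ ∧ ∀ δ' : ℝ, 0 < δ' → ∀ f ∈ V,
        farr f B ≤ r₀ + δ → ∃ f' ∈ V, farr f' B ≤ r₀ + δ' ∧ ‖f - f'‖ ≤ ε / 2 * (1 / 2) ^ k :=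
      fun k => ML (ε / 2 * (1 / 2) ^ k) (by positivity)
    choose D hDpos hD using Hk
    set bnd : ℕ → ℝ := fun k => if k = 0 then D 0 else min (D k) ((1 / 2) ^ k) with hbnddef
    have hbndpos : ∀ k, 0 < bnd k := by
      intro k
      by_cases h : k = 0 <;> simp [hbnddef, h, hDpos, lt_min_iff] <;>
        exact ⟨hDpos k, by positivity⟩
    have hbndD : ∀ k, bnd k ≤ D k := by
      intro k
      by_cases h : k = 0 <;> simp [hbnddef, h, min_le_left]
    have hbndsmall : ∀ k, k ≠ 0 → bnd k ≤ (1 / 2) ^ k := by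
      intro k h
      simp [hbnddef, h, min_le_right]
    refine ⟨bnd 0, hbndpos 0, fun f hfV hfr => ?_⟩
    have step : ∀ (k : ℕ) (h : BoundedContinuousFunction T X), h ∈ V →
        farr h B ≤ r₀ + bnd k →
        ∃ f', (f' ∈ V ∧ farr f' B ≤ r₀ + bnd (k + 1)) ∧ ‖h - f'‖ ≤ ε / 2 * (1 / 2) ^ k := by
      intro k h hhV hhr
      obtain ⟨f', h1, h2, h3⟩ := hD k (bnd (k + 1)) (hbndpos _) h hhV
        (hhr.trans (by gcongr; exact hbndD k))
      exact ⟨f', ⟨h1, h2⟩, h3⟩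
    choose Φ hΦ hΦd using step
    let seq : ∀ k : ℕ, {p : BoundedContinuousFunction T X // p ∈ V ∧ farr p B ≤ r₀ + bnd k} :=
      fun k => Nat.rec ⟨f, hfV, hfr⟩ (fun k p => ⟨Φ k p.1 p.2.1 p.2.2, hΦ k p.1 p.2.1 p.2.2⟩) k
    have hseq0 : (seq 0).1 = f := rfl
    have hseq : ∀ k, dist ((seq k).1)
        (seq (k + 1)).1 ≤ ε / 2 * (1 / 2) ^ k := by
      intro k
      have he : (seq (k + 1)).1
          = Φ k (seq k).1 (seq k).2.1 (seq k).2.2 := rfl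
      rw [he, dist_eq_norm]
      exact hΦd k _ _ _
    have hcauchy : CauchySeq (fun k => (seq k).1) :=
      cauchySeq_of_le_geometric (1 / 2) (ε / 2) (by norm_num) hseq
    obtain ⟨L, hL⟩ := cauchySeq_tendsto_of_complete hcauchy
    have hd0 : dist ((seq 0).1) L ≤ ε := by
      have h7 := dist_le_of_le_geometric_of_tendsto₀ (1 / 2) (ε / 2) (by norm_num) hseq hL
      calc dist ((seq 0).1) L ≤ (ε / 2) / (1 - 1 / 2) := h7
        _ = ε := by ring
    have hLV : L ∈ V := by
      rw [hVdef]
      exact IsClosed.mem_of_tendsto Metric.isClosed_closedBall hL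
        (Filter.Eventually.of_forall fun k => (seq k).2.1)
    have hLr : farr L B ≤ r₀ := by
      have hev : ∀ᶠ k : ℕ in Filter.atTop,
          farr L B ≤ r₀ + (1 / 2) ^ k + dist L (seq k).1 := by
        rw [Filter.eventually_atTop]
        refine ⟨1, fun k hk => ?_⟩
        have h8 := farr_le_farr_add hBne hBbd L (seq k).1
        have h9 : farr (seq k).1 B ≤ r₀ + (1 / 2) ^ k :=
          (seq k).2.2.trans (by gcongr; exact hbndsmall k (by omega))
        rw [← dist_eq_norm] at h8
        linarith
      have htend : Filter.Tendsto
          (fun k : ℕ => r₀ + (1 / 2 : ℝ) ^ k + dist L (seq k).1)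
          Filter.atTop (nhds (r₀ + 0 + 0)) := by
        refine Filter.Tendsto.add (Filter.Tendsto.add tendsto_const_nhds ?_) ?_
        · exact tendsto_pow_atTop_nhds_zero_of_lt_one (by norm_num) (by norm_num)
        · have := Filter.Tendsto.dist (tendsto_const_nhds (x := L)) hL
          simpa using this
      have := ge_of_tendsto htend hev
      linarith [this]
    refine ⟨L, ⟨hLV, le_antisymm hLr (rad_le_farr hBne hBbd hLV)⟩, ?_⟩
    rw [← hseq0, ← dist_eq_norm]
    exact hd0
  constructor
  · obtain ⟨δ, hδpos, happrox⟩ := approx 1 one_pos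
    obtain ⟨g, hgV, hgr⟩ := hex δ hδpos
    obtain ⟨L, hL, _⟩ := happrox g hgV hgr
    exact ⟨L, hL⟩
  · intro ε hε
    obtain ⟨δ, hδpos, happrox⟩ := approx ε hε
    refine ⟨δ, hδpos, fun v hv => ?_⟩
    obtain ⟨hvV, hvr⟩ := hv
    obtain ⟨L, hLc, hdist⟩ := happrox v hvV hvr
    have hmem : v - L ∈ closedBall (0 : BoundedContinuousFunction T X) ε :=
      mem_closedBall_zero_iff.mpr hdist
    have := Set.add_mem_add hLc hmem
    simpa using this


theorem stmt10 {T : Type*} [TopologicalSpace T]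
    {X : Type*} [NormedAddCommGroup X] [NormedSpace ℝ X] [UniformConvexSpace X]
    [CompleteSpace X] :
    (∀ B : Set (BoundedContinuousFunction T X), B.Nonempty → IsClosed B → IsBounded B →
      (cheb (closedBall (0 : BoundedContinuousFunction T X) 1) B).Nonempty) ∧
    propP1 (closedBall (0 : BoundedContinuousFunction T X) 1) := by
  constructor
  · intro B hBne _ hBbd
    exact (mainP1 B hBne hBbd).1
  · intro B hBne _ hBbd
    exact mainP1 B hBne hBbd
end
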